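/- Every finite simple graph G admits a proper vertex coloring using vi(G) colors; that is, the chromatic number of G is at most its vertex integrity. -/
import Mathlib


open SimpleGraph

/-- `S` is a vi(k)-set of the graph `G`: every connected component of the subgraph
induced by the complement of `S` has at most `k - |S|` vertices (and `|S| ≤ k`). -/
def IsVISet {V : Type*} (G : SimpleGraph V) (k : ℕ) (S : Finset V) : Prop :=
  S.card ≤ k ∧
    ∀ c : (G.induce {v : V | v ∉ S}).ConnectedComponent,
      Nat.card c.supp ≤ k - S.card

/-- The vertex integrity of `G`: the minimum `k` such that `G` has a vi(k)-set. -/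
noncomputable def vertexIntegrity {V : Type*} [Fintype V] (G : SimpleGraph V) : ℕ :=
  sInf {k : ℕ | ∃ S : Finset V, IsVISet G k S}

/-- Every finite simple graph admits a proper vertex coloring with `vi(G)` colors;
that is, its chromatic number is at most its vertex integrity. -/
theorem stmt_0 {V : Type*} [Fintype V] (G : SimpleGraph V) :
    G.Colorable (vertexIntegrity G) ∧
      G.chromaticNumber ≤ (vertexIntegrity G : ℕ∞) := by
  classical
  have hne : {k : ℕ | ∃ S : Finset V, IsVISet G k S}.Nonempty := by
    refine ⟨Fintype.card V, Finset.univ, ?_, ?_⟩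
    · simp
    · intro c
      obtain ⟨w, -⟩ := c.exists_rep
      exact absurd (Finset.mem_univ w.1) w.2
  obtain ⟨S, hS1, hS2⟩ := Nat.sInf_mem hne
  set k := vertexIntegrity G with hk
  set G' := G.induce {v : V | v ∉ S} with hG'
  let e : (c : G'.ConnectedComponent) → c.supp ≃ Fin _ :=
    fun c => @Fintype.equivFin _ (Fintype.ofFinite _)
  have hcard : ∀ c : G'.ConnectedComponent,
      @Fintype.card c.supp (Fintype.ofFinite _) ≤ k - S.card := fun c => by
    rw [← @Nat.card_eq_fintype_card _ (Fintype.ofFinite _)]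
    exact hS2 c
  let f : V → ℕ := fun v =>
    if h : v ∈ S then ((Fintype.equivFin S) ⟨v, h⟩ : ℕ)
    else S.card + (e (G'.connectedComponentMk ⟨v, h⟩) ⟨⟨v, h⟩, rfl⟩ : ℕ)
  have key : ∀ (w : {v : V | v ∉ S}) (c : G'.ConnectedComponent)
      (hc : G'.connectedComponentMk w = c),
      (e c ⟨w, hc⟩ : ℕ) = (e (G'.connectedComponentMk w) ⟨w, rfl⟩ : ℕ) := by
    rintro w c rfl; rfl
  have hSlt : ∀ (v : V) (h : v ∈ S), ((Fintype.equivFin S) ⟨v, h⟩ : ℕ) < S.card := by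
    intro v h
    exact ((Fintype.equivFin S) ⟨v, h⟩).isLt.trans_le (Fintype.card_coe S).le
  have hvalid : ∀ {u v : V}, G.Adj u v → f u ≠ f v := by
    intro u v huv hfe
    have hne' : u ≠ v := huv.ne
    by_cases hu : u ∈ S <;> by_cases hv : v ∈ S
    · simp only [f, dif_pos hu, dif_pos hv] at hfe
      exact hne' (congrArg Subtype.val
        ((Fintype.equivFin S).injective (Fin.val_injective hfe)))
    · simp only [f, dif_pos hu, dif_neg hv] at hfe
      have := hSlt u hu
      omega
    · simp only [f, dif_neg hu, dif_pos hv] at hfe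
      have := hSlt v hv
      omega
    · simp only [f, dif_neg hu, dif_neg hv] at hfe
      have hadj : G'.Adj ⟨u, hu⟩ ⟨v, hv⟩ := huv
      have hcc : G'.connectedComponentMk (⟨v, hv⟩ : {v : V | v ∉ S})
          = G'.connectedComponentMk ⟨u, hu⟩ :=
        (ConnectedComponent.sound hadj.reachable).symm
      rw [← key ⟨v, hv⟩ _ hcc, Nat.add_left_cancel_iff] at hfe
      have := (e (G'.connectedComponentMk ⟨u, hu⟩)).injective (Fin.val_injective hfe)
      have : (⟨u, hu⟩ : {v : V | v ∉ S}) = ⟨v, hv⟩ := congrArg Subtype.val this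
      exact hne' (congrArg Subtype.val this)
  have hbdd : ∀ v, f v < k := by
    intro v
    by_cases h : v ∈ S
    · simp only [f, dif_pos h]
      exact lt_of_lt_of_le (hSlt v h) hS1
    · simp only [f, dif_neg h]
      have h1 := (e (G'.connectedComponentMk ⟨v, h⟩) ⟨⟨v, h⟩, rfl⟩).isLt
      have h2 := hcard (G'.connectedComponentMk ⟨v, h⟩)
      omega
  have hcol : G.Colorable k := by
    rw [colorable_iff_exists_bdd_nat_coloring]
    exact ⟨Coloring.mk f (fun {u v} h => hvalid h), hbdd⟩
  exact ⟨hcol, hcol.chromaticNumber_le⟩
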